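/- Let G=(V,E) be a finite simple undirected graph and x ∈ V a vertex. Let (X_t, S_t) be the Diaconis–Fill coupling Markov chain started from (x, {x}). Then the marginal sequence (X_t) is a Markov chain started from x with the lazy random walk transition kernel p(·,·). -/

import Mathlib

open scoped Classical symmDiff

noncomputable section

variable {V : Type*} [Fintype V] [DecidableEq V]

/-- The volume `μ(S)` of a set of vertices: the sum of the degrees. -/
def vol (G : SimpleGraph V) [DecidableRel G.Adj] (S : Finset V) : ℝ :=
  ∑ x ∈ S, (G.degree x : ℝ)

/-- The number of edges leaving `S`, i.e. `∂(S) = e(S, Sᶜ)`. -/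
def bdry (G : SimpleGraph V) [DecidableRel G.Adj] (S : Finset V) : ℝ :=
  ∑ x ∈ S, ((Sᶜ.filter (G.Adj x)).card : ℝ)

/-- The conductance `φ(S) = ∂(S)/μ(S)`. -/
def phiCond (G : SimpleGraph V) [DecidableRel G.Adj] (S : Finset V) : ℝ :=
  bdry G S / vol G S

/-- The lazy random walk kernel `p(x,y)`: `1/2` if `x = y`, `1/(2 d(x))` if `x ~ y`,
and `0` otherwise. -/
def walkP (G : SimpleGraph V) [DecidableRel G.Adj] (x y : V) : ℝ :=
  if x = y then 1/2 else if G.Adj x y then 1 / (2 * (G.degree x : ℝ)) else 0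

/-- `p(x,S) = Σ_{y∈S} p(x,y)`. -/
def pset (G : SimpleGraph V) [DecidableRel G.Adj] (x : V) (S : Finset V) : ℝ :=
  ∑ y ∈ S, walkP G x y

/-- One step of the evolving set process from `S` with threshold `u`:
`S₁ = {y : p(y,S) ≥ u}`. -/
def esStep (G : SimpleGraph V) [DecidableRel G.Adj] (S : Finset V) (u : ℝ) : Finset V :=
  Finset.univ.filter fun y => u ≤ pset G y S

/-- The ESP transition kernel `K(S,S')`: the probability, for a uniform threshold
`U ∈ [0,1]`, that `{y : p(y,S) ≥ U} = S'`. -/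
def Kk (G : SimpleGraph V) [DecidableRel G.Adj] (S S' : Finset V) : ℝ :=
  (MeasureTheory.volume {u : ℝ | u ∈ Set.Icc (0:ℝ) 1 ∧ esStep G S u = S'}).toReal

/-- The volume-biased ESP transition kernel `K̂(S,S') = (μ(S')/μ(S)) K(S,S')`. -/
def Khat (G : SimpleGraph V) [DecidableRel G.Adj] (S S' : Finset V) : ℝ :=
  vol G S' / vol G S * Kk G S S'

/-- The Diaconis–Fill coupling transition kernel on `V × 2^V`:
`K*((y,S),(y',S')) = p(y,y') · K(S,S')·1(y'∈S') / P(y' ∈ S₁ | S₀ = S)`. -/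
def Kstar (G : SimpleGraph V) [DecidableRel G.Adj] (a b : V × Finset V) : ℝ :=
  walkP G a.1 b.1 *
    (if b.1 ∈ b.2 then
      Kk G a.2 b.2 / (∑ S'' : Finset V, if b.1 ∈ S'' then Kk G a.2 S'' else 0)
     else 0)

lemma walkP_nonneg (G : SimpleGraph V) [DecidableRel G.Adj] (x y : V) :
    0 ≤ walkP G x y := by
  unfold walkP
  split_ifs
  · norm_num
  · apply div_nonneg (by norm_num); positivity
  · exact le_refl 0

lemma walkP_symm_pos (G : SimpleGraph V) [DecidableRel G.Adj] {y y' : V}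
    (h : walkP G y y' ≠ 0) : 0 < walkP G y' y := by
  unfold walkP at *
  by_cases he : y = y'
  · subst he; simp only [if_pos rfl]; norm_num
  · have ha : G.Adj y y' := by
      by_contra hna; simp [he, hna] at h
    have ha' : G.Adj y' y := ha.symm
    have hne : y' ≠ y := fun hh => he hh.symm
    have hd : 0 < G.degree y' := by
      rw [SimpleGraph.degree_pos_iff_exists_adj]; exact ⟨y, ha'⟩
    simp only [hne, ha', if_false, if_true]
    positivity

lemma Kk_nonneg (G : SimpleGraph V) [DecidableRel G.Adj] (S S' : Finset V) :
    0 ≤ Kk G S S' := ENNReal.toReal_nonneg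

lemma Z_pos (G : SimpleGraph V) [DecidableRel G.Adj] (S : Finset V) (y' : V)
    (hp : 0 < pset G y' S) :
    0 < ∑ S'' : Finset V, if y' ∈ S'' then Kk G S S'' else 0 := by
  set p' : ℝ := min (pset G y' S) 1 with hp'def
  have hp' : 0 < p' := lt_min hp one_pos
  set A : Finset ℝ := insert (0:ℝ)
    ((Finset.univ.image fun z => pset G z S).filter fun r => r < p') with hA
  have hAne : A.Nonempty := ⟨0, Finset.mem_insert_self _ _⟩
  set q : ℝ := A.max' hAne with hq
  have hq0 : (0:ℝ) ≤ q := Finset.le_max' A 0 (Finset.mem_insert_self _ _)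
  have hqlt : q < p' := by
    rw [hq, Finset.max'_lt_iff]
    intro b hb
    rcases Finset.mem_insert.mp hb with h0 | hf
    · rw [h0]; exact hp'
    · exact (Finset.mem_filter.mp hf).2
  have hqmax : ∀ z : V, pset G z S < p' → pset G z S ≤ q := by
    intro z hz
    exact Finset.le_max' A _ (Finset.mem_insert_of_mem
      (Finset.mem_filter.mpr ⟨Finset.mem_image_of_mem _ (Finset.mem_univ z), hz⟩))
  set T : Finset V := Finset.univ.filter fun z => p' ≤ pset G z S with hT
  have hy'T : y' ∈ T := Finset.mem_filter.mpr ⟨Finset.mem_univ _, min_le_left _ _⟩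
  have hstep : ∀ u ∈ Set.Ioc q p', esStep G S u = T := by
    intro u hu
    ext z
    simp only [esStep, hT, Finset.mem_filter, Finset.mem_univ, true_and]
    constructor
    · intro huz
      by_contra hlt
      push_neg at hlt
      exact absurd huz (not_le.mpr (lt_of_le_of_lt (hqmax z hlt) hu.1))
    · intro hge; exact le_trans hu.2 hge
  have hsub : Set.Ioc q p' ⊆ {u : ℝ | u ∈ Set.Icc (0:ℝ) 1 ∧ esStep G S u = T} := by
    intro u hu
    exact ⟨⟨le_of_lt (lt_of_le_of_lt hq0 hu.1), le_trans hu.2 (min_le_right _ _)⟩, hstep u hu⟩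
  have hfin : MeasureTheory.volume {u : ℝ | u ∈ Set.Icc (0:ℝ) 1 ∧ esStep G S u = T} ≠ ⊤ := by
    refine ne_top_of_le_ne_top ?_ (MeasureTheory.measure_mono (fun u hu => hu.1))
    simp [Real.volume_Icc]
  have hKkT : 0 < Kk G S T := by
    have h1 : (MeasureTheory.volume (Set.Ioc q p')).toReal ≤ Kk G S T :=
      ENNReal.toReal_mono hfin (MeasureTheory.measure_mono hsub)
    have h2 : (MeasureTheory.volume (Set.Ioc q p')).toReal = p' - q := by
      simp [Real.volume_Ioc, ENNReal.toReal_ofReal (by linarith : (0:ℝ) ≤ p' - q)]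
    linarith
  have hle : Kk G S T ≤ ∑ S'' : Finset V, if y' ∈ S'' then Kk G S S'' else 0 := by
    have := Finset.single_le_sum (f := fun S'' : Finset V => if y' ∈ S'' then Kk G S S'' else 0)
      (fun i _ => by split_ifs; exacts [Kk_nonneg G S i, le_refl 0]) (Finset.mem_univ T)
    simpa [hy'T] using this
  linarith

lemma sumKstar (G : SimpleGraph V) [DecidableRel G.Adj] {y : V} {S : Finset V} (y' : V)
    (h : y ∈ S) : ∑ S' : Finset V, Kstar G (y, S) (y', S') = walkP G y y' := by
  by_cases hw : walkP G y y' = 0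
  · simp [Kstar, hw]
  · have hp : 0 < pset G y' S :=
      lt_of_lt_of_le (walkP_symm_pos G hw)
        (Finset.single_le_sum (fun z _ => walkP_nonneg G y' z) h)
    have hZ := Z_pos G S y' hp
    unfold Kstar
    simp only
    rw [← Finset.mul_sum]
    have : (∑ S' : Finset V, if y' ∈ S' then
        Kk G S S' / (∑ S'' : Finset V, if y' ∈ S'' then Kk G S S'' else 0) else 0) = 1 := by
      have heach : ∀ S' : Finset V, (if y' ∈ S' then
          Kk G S S' / (∑ S'' : Finset V, if y' ∈ S'' then Kk G S S'' else 0) else 0)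
          = (if y' ∈ S' then Kk G S S' else 0) /
            (∑ S'' : Finset V, if y' ∈ S'' then Kk G S S'' else 0) := by
        intro S'; split_ifs <;> simp
      rw [Finset.sum_congr rfl (fun S' _ => heach S'), ← Finset.sum_div,
        div_self (ne_of_gt hZ)]
    rw [this, mul_one]

lemma aux (G : SimpleGraph V) [DecidableRel G.Adj] (t : ℕ) :
    ∀ (v : Fin (t+1) → V) (S0 : Finset V), v 0 ∈ S0 →
    (∑ w : Fin (t+1) → Finset V,
      if w 0 = S0 then
        ∏ j : Fin t, Kstar G (v j.castSucc, w j.castSucc) (v j.succ, w j.succ)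
      else 0) =
    ∏ j : Fin t, walkP G (v j.castSucc) (v j.succ) := by
  induction t with
  | zero =>
    intro v S0 _
    simp only [Finset.univ_eq_empty, Finset.prod_empty]
    have hiff : ∀ w : Fin (0+1) → Finset V, (w 0 = S0) = (w = fun _ => S0) := by
      intro w
      refine propext ⟨fun h => funext fun i => ?_, fun h => by rw [h]⟩
      have : i = 0 := Fin.ext (by omega)
      rw [this, h]
    simp only [hiff]
    rw [Finset.sum_ite_eq' Finset.univ (fun _ : Fin (0+1) => S0) (fun _ => (1:ℝ))]
    simp
  | succ t ih =>
    intro v S0 h0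
    set v' : Fin (t+1) → V := fun i => v i.succ with hv'
    rw [← Equiv.sum_comp (Fin.consEquiv (fun _ : Fin (t+2) => Finset V))]
    simp only [Fin.consEquiv_apply, Fintype.sum_prod_type, Fin.cons_zero]
    have hpull : ∀ S' : Finset V, (∑ w' : Fin (t+1) → Finset V,
        if S' = S0 then ∏ j : Fin (t+1),
          Kstar G (v j.castSucc, (Fin.cons S' w' : Fin (t+2) → Finset V) j.castSucc) (v j.succ, (Fin.cons S' w' : Fin (t+2) → Finset V) j.succ)
        else 0)
        = if S' = S0 then (∑ w' : Fin (t+1) → Finset V, ∏ j : Fin (t+1),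
          Kstar G (v j.castSucc, (Fin.cons S' w' : Fin (t+2) → Finset V) j.castSucc) (v j.succ, (Fin.cons S' w' : Fin (t+2) → Finset V) j.succ))
        else 0 := by
      intro S'; split_ifs <;> simp
    rw [Finset.sum_congr rfl (fun S' _ => hpull S'), Finset.sum_ite_eq' Finset.univ S0,
      if_pos (Finset.mem_univ S0)]
    set P : (Fin (t+1) → Finset V) → ℝ := fun w' =>
      ∏ i : Fin t, Kstar G (v' i.castSucc, w' i.castSucc) (v' i.succ, w' i.succ) with hP
    have hprod : ∀ w' : Fin (t+1) → Finset V,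
        (∏ j : Fin (t+1), Kstar G (v j.castSucc, (Fin.cons S0 w' : Fin (t+2) → Finset V) j.castSucc)
            (v j.succ, (Fin.cons S0 w' : Fin (t+2) → Finset V) j.succ))
        = Kstar G (v 0, S0) (v (0 : Fin (t+1)).succ, w' 0) * P w' := by
      intro w'
      rw [Fin.prod_univ_succ]
      simp only [Fin.castSucc_zero, ← Fin.succ_castSucc, Fin.cons_zero, Fin.cons_succ]
      rfl
    rw [Finset.sum_congr rfl (fun w' _ => hprod w')]
    have swap : (∑ w' : Fin (t+1) → Finset V,
        Kstar G (v 0, S0) (v (0 : Fin (t+1)).succ, w' 0) * P w')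
        = ∑ S' : Finset V, Kstar G (v 0, S0) (v (0 : Fin (t+1)).succ, S') *
            ∑ w' : Fin (t+1) → Finset V, if w' 0 = S' then P w' else 0 := by
      symm
      calc (∑ S' : Finset V, Kstar G (v 0, S0) (v (0 : Fin (t+1)).succ, S') *
            ∑ w' : Fin (t+1) → Finset V, if w' 0 = S' then P w' else 0)
          = ∑ S' : Finset V, ∑ w' : Fin (t+1) → Finset V,
              if w' 0 = S' then Kstar G (v 0, S0) (v (0 : Fin (t+1)).succ, w' 0) * P w'
              else 0 := by
            refine Finset.sum_congr rfl fun S' _ => ?_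
            rw [Finset.mul_sum]
            refine Finset.sum_congr rfl fun w' _ => ?_
            split_ifs with h
            · rw [h]
            · simp
        _ = ∑ w' : Fin (t+1) → Finset V, ∑ S' : Finset V,
              if w' 0 = S' then Kstar G (v 0, S0) (v (0 : Fin (t+1)).succ, w' 0) * P w'
              else 0 := Finset.sum_comm
        _ = ∑ w' : Fin (t+1) → Finset V,
              Kstar G (v 0, S0) (v (0 : Fin (t+1)).succ, w' 0) * P w' := by
            refine Finset.sum_congr rfl fun w' _ => ?_
            simp
    rw [swap]
    have hinner : ∀ S' : Finset V,
        Kstar G (v 0, S0) (v (0 : Fin (t+1)).succ, S') *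
          (∑ w' : Fin (t+1) → Finset V, if w' 0 = S' then P w' else 0)
        = Kstar G (v 0, S0) (v (0 : Fin (t+1)).succ, S') *
          ∏ i : Fin t, walkP G (v' i.castSucc) (v' i.succ) := by
      intro S'
      by_cases hv1 : v (0 : Fin (t+1)).succ ∈ S'
      · rw [ih v' S' hv1]
      · have hv1' : v 1 ∉ S' := by rwa [← Fin.succ_zero_eq_one]
        have hz : Kstar G (v 0, S0) (v (0 : Fin (t+1)).succ, S') = 0 := by
          simp [Kstar, hv1']
        rw [hz, zero_mul, zero_mul]
    rw [Finset.sum_congr rfl (fun S' _ => hinner S'), ← Finset.sum_mul,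
      sumKstar G _ h0, Fin.prod_univ_succ]
    simp only [Fin.castSucc_zero, ← Fin.succ_castSucc]
    rfl

/-- Diaconis–Fill coupling, part 1: for the coupling Markov chain `(X_t, S_t)` started
from `(x, {x})`, the marginal sequence `(X_t)` is a Markov chain started from `x` with
the lazy random walk kernel: for every vertex path `(x = v 0, …, v t)`, summing the
joint path probabilities over all set paths gives the random walk path probability. -/
theorem statement4 (G : SimpleGraph V) [DecidableRel G.Adj] (x : V)
    (t : ℕ) (v : Fin (t+1) → V) (hv : v 0 = x) :
    (∑ w : Fin (t+1) → Finset V,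
      if w 0 = {x} then
        ∏ j : Fin t, Kstar G (v j.castSucc, w j.castSucc) (v j.succ, w j.succ)
      else 0) =
    ∏ j : Fin t, walkP G (v j.castSucc) (v j.succ) := by
  have hx : v 0 ∈ ({x} : Finset V) := by rw [hv]; exact Finset.mem_singleton_self x
  exact aux G t v {x} hx
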